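/- The edge set of the square grid can be partitioned into two sets E₁ and E₂ such that for each i ∈ {1,2}, the spanning subgraph of the square grid with edge set Eᵢ is a spanning double ray (i.e., it is connected and every vertex has degree exactly 2 in it). -/

import Mathlib

/-- The square grid: the simple graph on `ℤ × ℤ` in which `(a,b)` and `(c,d)` are adjacent
if and only if `|a − c| + |b − d| = 1`. -/
def squareGrid : SimpleGraph (ℤ × ℤ) where
  Adj u v := |u.1 - v.1| + |u.2 - v.2| = 1
  symm := by
    constructor
    intro u v h
    try beta_reduce at h ⊢
    rwa [abs_sub_comm v.1 u.1, abs_sub_comm v.2 u.2]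
  loopless := by
    constructor
    intro u h
    simp at h

/-- `ω` is the edge set of a spanning double ray of `G`: the spanning subgraph of `G`
with edge set `ω` is connected and every vertex has degree exactly 2 in it. -/
def IsSpanningDoubleRayEdgeSet {V : Type*} (G : SimpleGraph V) (ω : Set (Sym2 V)) : Prop :=
  ω ⊆ G.edgeSet ∧ (SimpleGraph.fromEdgeSet ω).Connected ∧
    ∀ v : V, ((SimpleGraph.fromEdgeSet ω).neighborSet v).ncard = 2

set_option maxHeartbeats 1000000

namespace GridDecomp

/-- Condition for the horizontal edge `(a,b)-(a+1,b)` to belong to pattern `ε`. -/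
def Hc (ε a b : ℤ) : Prop :=
  ((0 < b ∨ (b = 0 ∧ 0 ≤ a)) ∧ (a + b + ε) % 2 = 0) ∨
  ((b < 0 ∨ (b = 0 ∧ a < 0)) ∧ (a + b + ε) % 2 = 1)

/-- Condition for the vertical edge `(a,b)-(a,b+1)` to belong to pattern `ε`. -/
def Vc (ε a b : ℤ) : Prop :=
  ((0 < a ∨ (a = 0 ∧ b < 0)) ∧ (a + b + ε) % 2 = 0) ∨
  ((a < 0 ∨ (a = 0 ∧ 0 ≤ b)) ∧ (a + b + ε) % 2 = 1)

/-- The adjacency relation of pattern `ε` (a windmill-like double spiral). -/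
def rel (ε : ℤ) (u v : ℤ × ℤ) : Prop :=
  (v.1 = u.1 + 1 ∧ v.2 = u.2 ∧ Hc ε u.1 u.2) ∨
  (u.1 = v.1 + 1 ∧ u.2 = v.2 ∧ Hc ε v.1 v.2) ∨
  (v.2 = u.2 + 1 ∧ v.1 = u.1 ∧ Vc ε u.1 u.2) ∨
  (u.2 = v.2 + 1 ∧ u.1 = v.1 ∧ Vc ε v.1 v.2)

lemma rel_mk (ε a b c d : ℤ) :
    rel ε (a, b) (c, d) ↔
      ((c = a + 1 ∧ d = b ∧ Hc ε a b) ∨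
       (a = c + 1 ∧ b = d ∧ Hc ε c d) ∨
       (d = b + 1 ∧ c = a ∧ Vc ε a b) ∨
       (b = d + 1 ∧ a = c ∧ Vc ε c d)) := Iff.rfl

lemma rel_symm (ε : ℤ) : Symmetric (rel ε) := by
  intro u v h
  unfold rel at *
  tauto

/-- Pattern `ε` as a set of edges. -/
def ES (ε : ℤ) : Set (Sym2 (ℤ × ℤ)) := Sym2.fromRel (r := rel ε) (by constructor; intro u v h; exact rel_symm ε h)

lemma rel_ne {ε : ℤ} {u v : ℤ × ℤ} (h : rel ε u v) : u ≠ v := by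
  rintro rfl
  rcases h with ⟨h1, _, _⟩ | ⟨h1, _, _⟩ | ⟨h1, _, _⟩ | ⟨h1, _, _⟩ <;> omega

lemma rel_adj {ε : ℤ} {u v : ℤ × ℤ} (h : rel ε u v) : squareGrid.Adj u v := by
  show |u.1 - v.1| + |u.2 - v.2| = 1
  rcases h with ⟨h1, h2, _⟩ | ⟨h1, h2, _⟩ | ⟨h1, h2, _⟩ | ⟨h1, h2, _⟩
  · rw [show u.1 - v.1 = -1 by omega, show u.2 - v.2 = 0 by omega]; decide
  · rw [show u.1 - v.1 = 1 by omega, show u.2 - v.2 = 0 by omega]; decide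
  · rw [show u.1 - v.1 = 0 by omega, show u.2 - v.2 = -1 by omega]; decide
  · rw [show u.1 - v.1 = 0 by omega, show u.2 - v.2 = 1 by omega]; decide

lemma adj_iff_rel (ε : ℤ) (v w : ℤ × ℤ) :
    (SimpleGraph.fromEdgeSet (ES ε)).Adj v w ↔ rel ε v w := by
  rw [SimpleGraph.fromEdgeSet_adj]
  constructor
  · rintro ⟨h, -⟩
    rwa [ES, Sym2.fromRel_prop] at h
  · intro h
    exact ⟨by rwa [ES, Sym2.fromRel_prop], rel_ne h⟩

lemma Hc01 (a b : ℤ) : Hc 0 a b ∨ Hc 1 a b := by unfold Hc; omega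

lemma Vc01 (a b : ℤ) : Vc 0 a b ∨ Vc 1 a b := by unfold Vc; omega

lemma union_eq : ES 0 ∪ ES 1 = squareGrid.edgeSet := by
  ext e
  induction e using Sym2.ind with
  | _ u v =>
    simp only [Set.mem_union, ES, Sym2.fromRel_prop, SimpleGraph.mem_edgeSet]
    constructor
    · rintro (h | h) <;> exact rel_adj h
    · intro h
      have h' : |u.1 - v.1| + |u.2 - v.2| = 1 := h
      obtain ⟨a, b⟩ := u
      obtain ⟨c, d⟩ := v
      simp only at h'
      have hcase : (c = a + 1 ∧ d = b) ∨ (a = c + 1 ∧ b = d) ∨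
          (d = b + 1 ∧ c = a) ∨ (b = d + 1 ∧ a = c) := by
        rcases abs_cases (a - c) with ⟨e1, f1⟩ | ⟨e1, f1⟩ <;>
          rcases abs_cases (b - d) with ⟨e2, f2⟩ | ⟨e2, f2⟩ <;>
          rw [e1, e2] at h' <;> omega
      rcases hcase with ⟨h1, h2⟩ | ⟨h1, h2⟩ | ⟨h1, h2⟩ | ⟨h1, h2⟩
      · rcases Hc01 a b with h3 | h3
        · exact Or.inl (Or.inl ⟨h1, h2, h3⟩)
        · exact Or.inr (Or.inl ⟨h1, h2, h3⟩)
      · rcases Hc01 c d with h3 | h3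
        · exact Or.inl (Or.inr (Or.inl ⟨h1, h2, h3⟩))
        · exact Or.inr (Or.inr (Or.inl ⟨h1, h2, h3⟩))
      · rcases Vc01 a b with h3 | h3
        · exact Or.inl (Or.inr (Or.inr (Or.inl ⟨h1, h2, h3⟩)))
        · exact Or.inr (Or.inr (Or.inr (Or.inl ⟨h1, h2, h3⟩)))
      · rcases Vc01 c d with h3 | h3
        · exact Or.inl (Or.inr (Or.inr (Or.inr ⟨h1, h2, h3⟩)))
        · exact Or.inr (Or.inr (Or.inr (Or.inr ⟨h1, h2, h3⟩)))

lemma disj : Disjoint (ES 0) (ES 1) := by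
  rw [Set.disjoint_left]
  intro e
  induction e using Sym2.ind with
  | _ u v =>
    simp only [ES, Sym2.fromRel_prop]
    intro h0 h1
    obtain ⟨a, b⟩ := u
    obtain ⟨c, d⟩ := v
    rcases h0 with ⟨e1, e2, h⟩ | ⟨e1, e2, h⟩ | ⟨e1, e2, h⟩ | ⟨e1, e2, h⟩ <;>
      rcases h1 with ⟨f1, f2, h'⟩ | ⟨f1, f2, h'⟩ | ⟨f1, f2, h'⟩ | ⟨f1, f2, h'⟩ <;>
      simp only [Hc, Vc] at h h' <;>
      simp only at e1 e2 f1 f2 <;>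
      omega

lemma nbr_char (ε a b c d : ℤ) :
    rel ε (a, b) (c, d) ↔
      ((Hc ε a b ∧ c = a + 1 ∧ d = b) ∨ (Hc ε (a - 1) b ∧ c = a - 1 ∧ d = b) ∨
       (Vc ε a b ∧ c = a ∧ d = b + 1) ∨ (Vc ε a (b - 1) ∧ c = a ∧ d = b - 1)) := by
  constructor
  · rintro (⟨hc, hd, hH⟩ | ⟨hc, hd, hH⟩ | ⟨hc, hd, hV⟩ | ⟨hc, hd, hV⟩)
    · exact Or.inl ⟨hH, hc, hd⟩
    · refine Or.inr (Or.inl ⟨?_, by omega, by omega⟩)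
      rwa [show a - 1 = c by omega, show b = d from hd]
    · exact Or.inr (Or.inr (Or.inl ⟨hV, hd, hc⟩))
    · refine Or.inr (Or.inr (Or.inr ⟨?_, by omega, by omega⟩))
      rwa [show a = c from hd, show b - 1 = d by omega]
  · rintro (⟨hH, hc, hd⟩ | ⟨hH, hc, hd⟩ | ⟨hV, hc, hd⟩ | ⟨hV, hc, hd⟩)
    · exact Or.inl ⟨hc, hd, hH⟩
    · refine Or.inr (Or.inl ⟨by omega, by omega, ?_⟩)
      rwa [show c = a - 1 from hc, show d = b from hd]
    · exact Or.inr (Or.inr (Or.inl ⟨hd, hc, hV⟩))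
    · refine Or.inr (Or.inr (Or.inr ⟨by omega, by omega, ?_⟩))
      rwa [show c = a from hc, show d = b - 1 from hd]

lemma deg (ε : ℤ) (hε : ε = 0 ∨ ε = 1) (v : ℤ × ℤ) :
    ((SimpleGraph.fromEdgeSet (ES ε)).neighborSet v).ncard = 2 := by
  obtain ⟨a, b⟩ := v
  by_cases hO : a = 0 ∧ b = 0
  · obtain ⟨rfl, rfl⟩ := hO
    rcases hε with rfl | rfl
    · have hset : (SimpleGraph.fromEdgeSet (ES 0)).neighborSet (0, 0) =
          {((1 : ℤ), (0 : ℤ)), ((-1 : ℤ), (0 : ℤ))} := by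
        ext ⟨c, d⟩
        simp only [SimpleGraph.mem_neighborSet, adj_iff_rel, Set.mem_insert_iff,
          Set.mem_singleton_iff]
        rw [nbr_char]
        simp only [Prod.mk.injEq]
        unfold Hc Vc
        omega
      rw [hset, Set.ncard_pair (by decide)]
    · have hset : (SimpleGraph.fromEdgeSet (ES 1)).neighborSet (0, 0) =
          {((0 : ℤ), (1 : ℤ)), ((0 : ℤ), (-1 : ℤ))} := by
        ext ⟨c, d⟩
        simp only [SimpleGraph.mem_neighborSet, adj_iff_rel, Set.mem_insert_iff,
          Set.mem_singleton_iff]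
        rw [nbr_char]
        simp only [Prod.mk.injEq]
        unfold Hc Vc
        omega
      rw [hset, Set.ncard_pair (by decide)]
  · by_cases h1 : Hc ε a b <;> by_cases h2 : Vc ε a b
    · have h3 : ¬ Hc ε (a - 1) b := by unfold Hc at h1 ⊢; omega
      have h4 : ¬ Vc ε a (b - 1) := by unfold Vc at h2 ⊢; omega
      have hset : (SimpleGraph.fromEdgeSet (ES ε)).neighborSet (a, b) =
          {(a + 1, b), (a, b + 1)} := by
        ext ⟨c, d⟩
        simp only [SimpleGraph.mem_neighborSet, adj_iff_rel, Set.mem_insert_iff,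
          Set.mem_singleton_iff, nbr_char, Prod.mk.injEq, h1, h2, h3, h4,
          true_and, false_and, false_or, or_false]
      rw [hset, Set.ncard_pair (by intro h; rw [Prod.mk.injEq] at h; omega)]
    · have h3 : ¬ Hc ε (a - 1) b := by unfold Hc at h1 ⊢; omega
      have h4 : Vc ε a (b - 1) := by unfold Vc at h2 ⊢; omega
      have hset : (SimpleGraph.fromEdgeSet (ES ε)).neighborSet (a, b) =
          {(a + 1, b), (a, b - 1)} := by
        ext ⟨c, d⟩
        simp only [SimpleGraph.mem_neighborSet, adj_iff_rel, Set.mem_insert_iff,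
          Set.mem_singleton_iff, nbr_char, Prod.mk.injEq, h1, h2, h3, h4,
          true_and, false_and, false_or, or_false]
      rw [hset, Set.ncard_pair (by intro h; rw [Prod.mk.injEq] at h; omega)]
    · have h3 : Hc ε (a - 1) b := by unfold Hc at h1 ⊢; omega
      have h4 : ¬ Vc ε a (b - 1) := by unfold Vc at h2 ⊢; omega
      have hset : (SimpleGraph.fromEdgeSet (ES ε)).neighborSet (a, b) =
          {(a - 1, b), (a, b + 1)} := by
        ext ⟨c, d⟩
        simp only [SimpleGraph.mem_neighborSet, adj_iff_rel, Set.mem_insert_iff,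
          Set.mem_singleton_iff, nbr_char, Prod.mk.injEq, h1, h2, h3, h4,
          true_and, false_and, false_or, or_false]
      rw [hset, Set.ncard_pair (by intro h; rw [Prod.mk.injEq] at h; omega)]
    · have h3 : Hc ε (a - 1) b := by unfold Hc at h1 ⊢; omega
      have h4 : Vc ε a (b - 1) := by unfold Vc at h2 ⊢; omega
      have hset : (SimpleGraph.fromEdgeSet (ES ε)).neighborSet (a, b) =
          {(a - 1, b), (a, b - 1)} := by
        ext ⟨c, d⟩
        simp only [SimpleGraph.mem_neighborSet, adj_iff_rel, Set.mem_insert_iff,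
          Set.mem_singleton_iff, nbr_char, Prod.mk.injEq, h1, h2, h3, h4,
          true_and, false_and, false_or, or_false]
      rw [hset, Set.ncard_pair (by intro h; rw [Prod.mk.injEq] at h; omega)]

/-- Lap measure of the inward spiral flow. -/
def tZ (ε x y : ℤ) : ℤ :=
  if 1 ≤ x ∧ 0 ≤ y then 4 * ((x + y - (x + y + ε) % 2) / 2) + 3
  else if x ≤ 0 ∧ 1 ≤ y then 4 * ((y - x + (x + y + ε) % 2) / 2) + 2
  else if x ≤ -1 ∧ y ≤ 0 then 4 * ((-x - y - (x + y + ε) % 2) / 2) + 5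
  else 4 * ((x - y + (x + y + ε) % 2) / 2)

/-- Within-lap measure of the inward spiral flow. -/
def sZ (ε x y : ℤ) : ℤ :=
  if 1 ≤ x ∧ 0 ≤ y then 2 * x - (x + y + ε) % 2
  else if x ≤ 0 ∧ 1 ≤ y then 2 * y + (x + y + ε) % 2
  else if x ≤ -1 ∧ y ≤ 0 then -2 * x - (x + y + ε) % 2
  else -2 * y + (x + y + ε) % 2

lemma tZ_nonneg (ε x y : ℤ) : 0 ≤ tZ ε x y := by
  unfold tZ; split_ifs <;> omega

lemma sZ_nonneg (ε x y : ℤ) : 0 ≤ sZ ε x y := by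
  unfold sZ; split_ifs <;> omega

lemma step (ε a b : ℤ) (hO : ¬(a = 0 ∧ b = 0)) :
    ∃ c d : ℤ, rel ε (a, b) (c, d) ∧ 0 ≤ tZ ε a b ∧ 0 ≤ sZ ε a b ∧
      (tZ ε c d < tZ ε a b ∨ (tZ ε c d = tZ ε a b ∧ sZ ε c d < sZ ε a b)) := by
  by_cases hp : (a + b + ε) % 2 = 0
  · by_cases hd : 1 ≤ a ∨ (a = 0 ∧ b ≤ -1)
    · refine ⟨a, b + 1, ?_, ?_⟩
      · exact Or.inr (Or.inr (Or.inl ⟨rfl, rfl, by unfold Vc; omega⟩))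
      · unfold tZ sZ; split_ifs <;> omega
    · refine ⟨a, b - 1, ?_, ?_⟩
      · exact Or.inr (Or.inr (Or.inr ⟨by omega, rfl, by unfold Vc; omega⟩))
      · unfold tZ sZ; split_ifs <;> omega
  · by_cases hd : 1 ≤ b ∨ (b = 0 ∧ 1 ≤ a)
    · refine ⟨a - 1, b, ?_, ?_⟩
      · exact Or.inr (Or.inl ⟨by omega, rfl, by unfold Hc; omega⟩)
      · unfold tZ sZ; split_ifs <;> omega
    · refine ⟨a + 1, b, ?_, ?_⟩
      · exact Or.inl ⟨rfl, rfl, by unfold Hc; omega⟩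
      · unfold tZ sZ; split_ifs <;> omega

lemma reach (ε : ℤ) (v : ℤ × ℤ) :
    (SimpleGraph.fromEdgeSet (ES ε)).Reachable v (0, 0) := by
  obtain ⟨a, b⟩ := v
  have main : ∀ n m : ℕ, ∀ a b : ℤ, (tZ ε a b).toNat < n → (sZ ε a b).toNat < m →
      (SimpleGraph.fromEdgeSet (ES ε)).Reachable (a, b) (0, 0) := by
    intro n
    induction n with
    | zero => intro m a b ht _; exact absurd ht (Nat.not_lt_zero _)
    | succ n ihn =>
      intro m
      induction m with
      | zero => intro a b _ hs; exact absurd hs (Nat.not_lt_zero _)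
      | succ m ihm =>
        intro a b ht hs
        by_cases hO : a = 0 ∧ b = 0
        · obtain ⟨rfl, rfl⟩ := hO
          exact SimpleGraph.Reachable.refl _
        · obtain ⟨c, d, hrel, htnn, hsnn, hlex⟩ := step ε a b hO
          have hadj : (SimpleGraph.fromEdgeSet (ES ε)).Adj (a, b) (c, d) :=
            (adj_iff_rel ε _ _).mpr hrel
          refine hadj.reachable.trans ?_
          rcases hlex with h | ⟨h1, h2⟩
          · have hcd := tZ_nonneg ε c d
            exact ihn ((sZ ε c d).toNat + 1) c d (by omega) (by omega)
          · have hcd := sZ_nonneg ε c d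
            exact ihm c d (by omega) (by omega)
  exact main ((tZ ε a b).toNat + 1) ((sZ ε a b).toNat + 1) a b (by omega) (by omega)

lemma connected (ε : ℤ) : (SimpleGraph.fromEdgeSet (ES ε)).Connected := by
  rw [SimpleGraph.connected_iff]
  exact ⟨fun u v => (reach ε u).trans (reach ε v).symm, ⟨(0, 0)⟩⟩

lemma subset_edgeSet (ε : ℤ) : ES ε ⊆ squareGrid.edgeSet := by
  intro e
  induction e using Sym2.ind with
  | _ u v =>
    intro h
    rw [ES, Sym2.fromRel_prop] at h
    exact (squareGrid.mem_edgeSet).mpr (rel_adj h)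

lemma isDR (ε : ℤ) (hε : ε = 0 ∨ ε = 1) :
    IsSpanningDoubleRayEdgeSet squareGrid (ES ε) :=
  ⟨subset_edgeSet ε, connected ε, deg ε hε⟩

end GridDecomp

/-- The edge set of the square grid can be partitioned into two sets, each of which is the
edge set of a spanning double ray of the square grid. -/
theorem edge_partition_of_squareGrid_into_two_double_rays :
    ∃ E₁ E₂ : Set (Sym2 (ℤ × ℤ)),
      Disjoint E₁ E₂ ∧ E₁ ∪ E₂ = squareGrid.edgeSet ∧
      IsSpanningDoubleRayEdgeSet squareGrid E₁ ∧
      IsSpanningDoubleRayEdgeSet squareGrid E₂ := by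
  exact ⟨GridDecomp.ES 0, GridDecomp.ES 1, GridDecomp.disj, GridDecomp.union_eq,
    GridDecomp.isDR 0 (Or.inl rfl), GridDecomp.isDR 1 (Or.inr rfl)⟩
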